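/- (Classification of rank-2 charge-conserving braid solutions.) Let R be an invertible charge-conserving matrix in Matrix (Fin 2 × Fin 2) (Fin 2 × Fin 2) ℂ, and write α₁ = R (1,1) (1,1), α₂ = R (2,2) (2,2), a = R (2,1) (2,1), b = R (2,1) (1,2), c = R (1,2) (2,1), d = R (1,2) (1,2). Then R satisfies the braid relation R₁ * R₂ * R₁ = R₂ * R₁ * R₂ if and only if at least one of the following holds: (1) R = α₁ • 1; (2) a = 0 and d = 0; (3) d = 0, b*c = -α₁*(a - α₁), and (α₂ = α₁ or α₂ = a - α₁); (4) a = 0, b*c = -α₁*(d - α₁), and (α₂ = α₁ or α₂ = d - α₁). -/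
import Mathlib


open Matrix

noncomputable section

/-- The width-3 matrix `M₁ = M ⊗ 1`. -/
def Lone {N : ℕ} (M : Matrix (Fin N × Fin N) (Fin N × Fin N) ℂ) :
    Matrix (Fin N × Fin N × Fin N) (Fin N × Fin N × Fin N) ℂ :=
  Matrix.of fun p q =>
    M (p.1, p.2.1) (q.1, q.2.1) * (if p.2.2 = q.2.2 then (1 : ℂ) else 0)

/-- The width-3 matrix `M₂ = 1 ⊗ M`. -/
def Ltwo {N : ℕ} (M : Matrix (Fin N × Fin N) (Fin N × Fin N) ℂ) :
    Matrix (Fin N × Fin N × Fin N) (Fin N × Fin N × Fin N) ℂ :=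
  Matrix.of fun p q =>
    (if p.1 = q.1 then (1 : ℂ) else 0) * M (p.2.1, p.2.2) (q.2.1, q.2.2)

/-- The pair (S,R) satisfies the loop braid relations. -/
def LoopBraid {N : ℕ} (S R : Matrix (Fin N × Fin N) (Fin N × Fin N) ℂ) : Prop :=
  S * S = 1 ∧
  Lone S * Ltwo S * Lone S = Ltwo S * Lone S * Ltwo S ∧
  Lone R * Ltwo R * Lone R = Ltwo R * Lone R * Ltwo R ∧
  Lone R * Ltwo R * Lone S = Ltwo S * Lone R * Ltwo R ∧
  Lone R * Ltwo S * Lone S = Ltwo S * Lone S * Ltwo R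

/-- A width-2 rank-N matrix is charge-conserving. -/
def ChargeConserving {N : ℕ} (M : Matrix (Fin N × Fin N) (Fin N × Fin N) ℂ) : Prop :=
  ∀ k l i j : Fin N, M (k, l) (i, j) ≠ 0 → ((k, l) = (i, j) ∨ (k, l) = (j, i))

/-- The element of `Fin 2` labelled `1`. -/
def e1 : Fin 2 := 0
/-- The element of `Fin 2` labelled `2`. -/
def e2 : Fin 2 := 1

set_option maxHeartbeats 2000000 in
lemma braid_iff (R : Matrix (Fin 2 × Fin 2) (Fin 2 × Fin 2) ℂ) (hcc : ChargeConserving R) :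
    Lone R * Ltwo R * Lone R = Ltwo R * Lone R * Ltwo R ↔
    (R (1,0) (1,0) * R (1,0) (0,1) * R (0,1) (0,1) = 0 ∧
     R (1,0) (1,0) * R (0,1) (1,0) * R (0,1) (0,1) = 0 ∧
     R (1,0) (1,0) * R (0,1) (0,1) * (R (0,1) (0,1) - R (1,0) (1,0)) = 0 ∧
     R (1,0) (1,0) * (R (1,0) (0,1) * R (0,1) (1,0) + R (0,0) (0,0) * R (1,0) (1,0) - R (0,0) (0,0)^2) = 0 ∧
     R (1,0) (1,0) * (R (1,0) (0,1) * R (0,1) (1,0) + R (1,1) (1,1) * R (1,0) (1,0) - R (1,1) (1,1)^2) = 0 ∧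
     R (0,1) (0,1) * (R (1,0) (0,1) * R (0,1) (1,0) + R (0,0) (0,0) * R (0,1) (0,1) - R (0,0) (0,0)^2) = 0 ∧
     R (0,1) (0,1) * (R (1,0) (0,1) * R (0,1) (1,0) + R (1,1) (1,1) * R (0,1) (0,1) - R (1,1) (1,1)^2) = 0) := by
  have hz : ∀ k l i j : Fin 2, ((k,l) ≠ (i,j) ∧ (k,l) ≠ (j,i)) → R (k,l) (i,j) = 0 := by
    intro k l i j hne
    by_contra h
    exact (hcc k l i j h).elim hne.1 hne.2
  have z1 : R (0,0) (0,1) = 0 := hz 0 0 0 1 (by decide)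
  have z2 : R (0,0) (1,0) = 0 := hz 0 0 1 0 (by decide)
  have z3 : R (0,0) (1,1) = 0 := hz 0 0 1 1 (by decide)
  have z4 : R (0,1) (0,0) = 0 := hz 0 1 0 0 (by decide)
  have z5 : R (0,1) (1,1) = 0 := hz 0 1 1 1 (by decide)
  have z6 : R (1,0) (0,0) = 0 := hz 1 0 0 0 (by decide)
  have z7 : R (1,0) (1,1) = 0 := hz 1 0 1 1 (by decide)
  have z8 : R (1,1) (0,0) = 0 := hz 1 1 0 0 (by decide)
  have z9 : R (1,1) (0,1) = 0 := hz 1 1 0 1 (by decide)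
  have z10 : R (1,1) (1,0) = 0 := hz 1 1 1 0 (by decide)
  constructor
  · intro h
    have E1 := Matrix.ext_iff.2 h ((1:Fin 2),(0:Fin 2),(0:Fin 2)) (1,0,0)
    have E2 := Matrix.ext_iff.2 h ((1:Fin 2),(0:Fin 2),(0:Fin 2)) (0,1,0)
    have E3 := Matrix.ext_iff.2 h ((0:Fin 2),(1:Fin 2),(0:Fin 2)) (1,0,0)
    have E4 := Matrix.ext_iff.2 h ((0:Fin 2),(1:Fin 2),(0:Fin 2)) (0,1,0)
    have E5 := Matrix.ext_iff.2 h ((0:Fin 2),(0:Fin 2),(1:Fin 2)) (0,0,1)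
    have E6 := Matrix.ext_iff.2 h ((0:Fin 2),(1:Fin 2),(1:Fin 2)) (0,1,1)
    have E7 := Matrix.ext_iff.2 h ((1:Fin 2),(1:Fin 2),(0:Fin 2)) (1,1,0)
    simp only [Matrix.mul_apply, Lone, Ltwo, Matrix.of_apply, Fintype.sum_prod_type,
      Fin.sum_univ_two, Prod.mk.injEq, one_ne_zero, zero_ne_one, and_true, and_false,
      true_and, false_and, if_true, if_false, reduceIte, and_self,
      z1, z2, z3, z4, z5, z6, z7, z8, z9, z10,
      mul_one, mul_zero, zero_mul, one_mul, add_zero, zero_add] at E1 E2 E3 E4 E5 E6 E7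
    refine ⟨?_, ?_, ?_, ?_, ?_, ?_, ?_⟩
    · linear_combination E2
    · linear_combination E3
    · linear_combination E4
    · linear_combination E1
    · linear_combination -E7
    · linear_combination -E5
    · linear_combination E6
  · rintro ⟨h1, h2, h3, h4, h5, h6, h7⟩
    ext ⟨i, j, k⟩ ⟨i', j', k'⟩
    fin_cases i <;> fin_cases j <;> fin_cases k <;> fin_cases i' <;> fin_cases j' <;> fin_cases k' <;>
      simp only [Matrix.mul_apply, Lone, Ltwo, Matrix.of_apply, Fintype.sum_prod_type,
        Fin.sum_univ_two, Fin.mk_zero, Fin.mk_one, Fin.isValue, Prod.mk.injEq,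
        one_ne_zero, zero_ne_one, and_true, and_false, true_and, false_and,
        if_true, if_false, reduceIte, and_self,
        z1, z2, z3, z4, z5, z6, z7, z8, z9, z10,
        mul_one, mul_zero, zero_mul, one_mul, add_zero, zero_add] <;>
      first
        | ring1
        | linear_combination h1
        | linear_combination -h1
        | linear_combination h2
        | linear_combination -h2
        | linear_combination h3
        | linear_combination -h3
        | linear_combination h4
        | linear_combination -h4
        | linear_combination h5
        | linear_combination -h5
        | linear_combination h6
        | linear_combination -h6
        | linear_combination h7
        | linear_combination -h7

lemma class_iff (A B a b c d : ℂ) (hA : A ≠ 0) (hB : B ≠ 0) :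
    (a * b * d = 0 ∧ a * c * d = 0 ∧ a * d * (d - a) = 0 ∧
     a * (b * c + A * a - A ^ 2) = 0 ∧ a * (b * c + B * a - B ^ 2) = 0 ∧
     d * (b * c + A * d - A ^ 2) = 0 ∧ d * (b * c + B * d - B ^ 2) = 0) ↔
    ((a = A ∧ d = A ∧ B = A ∧ b = 0 ∧ c = 0) ∨
     (a = 0 ∧ d = 0) ∨
     (d = 0 ∧ b * c = -A * (a - A) ∧ (B = A ∨ B = a - A)) ∨
     (a = 0 ∧ b * c = -A * (d - A) ∧ (B = A ∨ B = d - A))) := by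
  constructor
  · rintro ⟨h1, h2, h3, h4, h5, h6, h7⟩
    by_cases ha : a = 0 <;> by_cases hd : d = 0
    · exact Or.inr (Or.inl ⟨ha, hd⟩)
    · -- a = 0, d ≠ 0 : case 4
      refine Or.inr (Or.inr (Or.inr ⟨ha, ?_, ?_⟩))
      · have h6' := (mul_eq_zero.mp h6).resolve_left hd
        linear_combination h6'
      · have h6' := (mul_eq_zero.mp h6).resolve_left hd
        have h7' := (mul_eq_zero.mp h7).resolve_left hd
        have h8 : (B - A) * (B + A - d) = 0 := by linear_combination h6' - h7'
        rcases mul_eq_zero.mp h8 with h | h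
        · exact Or.inl (sub_eq_zero.mp h)
        · exact Or.inr (by linear_combination h)
    · -- a ≠ 0, d = 0 : case 3
      refine Or.inr (Or.inr (Or.inl ⟨hd, ?_, ?_⟩))
      · have h4' := (mul_eq_zero.mp h4).resolve_left ha
        linear_combination h4'
      · have h4' := (mul_eq_zero.mp h4).resolve_left ha
        have h5' := (mul_eq_zero.mp h5).resolve_left ha
        have h8 : (B - A) * (B + A - a) = 0 := by linear_combination h4' - h5'
        rcases mul_eq_zero.mp h8 with h | h
        · exact Or.inl (sub_eq_zero.mp h)
        · exact Or.inr (by linear_combination h)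
    · -- a ≠ 0, d ≠ 0 : case 1
      have hb : b = 0 := by
        have := (mul_eq_zero.mp h1).resolve_right hd
        exact (mul_eq_zero.mp this).resolve_left ha
      have hc : c = 0 := by
        have := (mul_eq_zero.mp h2).resolve_right hd
        exact (mul_eq_zero.mp this).resolve_left ha
      have had : d = a := by
        have h3' := (mul_eq_zero.mp h3).resolve_left (mul_ne_zero ha hd)
        linear_combination h3'
      have h4' := (mul_eq_zero.mp h4).resolve_left ha
      have h5' := (mul_eq_zero.mp h5).resolve_left ha
      have haA : a = A := by
        have h9 : A * (a - A) = 0 := by linear_combination h4' - c * hb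
        have := (mul_eq_zero.mp h9).resolve_left hA
        linear_combination this
      have haB : a = B := by
        have h9 : B * (a - B) = 0 := by linear_combination h5' - c * hb
        have := (mul_eq_zero.mp h9).resolve_left hB
        linear_combination this
      exact Or.inl ⟨haA, by rw [had, haA], by rw [← haB, haA], hb, hc⟩
  · rintro (⟨rfl, rfl, rfl, rfl, rfl⟩ | ⟨rfl, rfl⟩ | ⟨rfl, h2, h3 | h3⟩ | ⟨rfl, h2, h3 | h3⟩) <;>
      try subst h3
    all_goals
      refine ⟨?_, ?_, ?_, ?_, ?_, ?_, ?_⟩ <;>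
        first
          | ring1
          | linear_combination a * h2
          | linear_combination d * h2

theorem stmt18 (R : Matrix (Fin 2 × Fin 2) (Fin 2 × Fin 2) ℂ)
    (hinv : IsUnit R) (hcc : ChargeConserving R) :
    Lone R * Ltwo R * Lone R = Ltwo R * Lone R * Ltwo R ↔
      (R = R (e1, e1) (e1, e1) • (1 : Matrix (Fin 2 × Fin 2) (Fin 2 × Fin 2) ℂ) ∨
       (R (e2, e1) (e2, e1) = 0 ∧ R (e1, e2) (e1, e2) = 0) ∨
       (R (e1, e2) (e1, e2) = 0 ∧
        R (e2, e1) (e1, e2) * R (e1, e2) (e2, e1) =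
          -(R (e1, e1) (e1, e1)) * (R (e2, e1) (e2, e1) - R (e1, e1) (e1, e1)) ∧
        (R (e2, e2) (e2, e2) = R (e1, e1) (e1, e1) ∨
         R (e2, e2) (e2, e2) = R (e2, e1) (e2, e1) - R (e1, e1) (e1, e1))) ∨
       (R (e2, e1) (e2, e1) = 0 ∧
        R (e2, e1) (e1, e2) * R (e1, e2) (e2, e1) =
          -(R (e1, e1) (e1, e1)) * (R (e1, e2) (e1, e2) - R (e1, e1) (e1, e1)) ∧
        (R (e2, e2) (e2, e2) = R (e1, e1) (e1, e1) ∨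
         R (e2, e2) (e2, e2) = R (e1, e2) (e1, e2) - R (e1, e1) (e1, e1)))) := by
  have hz : ∀ k l i j : Fin 2, ((k,l) ≠ (i,j) ∧ (k,l) ≠ (j,i)) → R (k,l) (i,j) = 0 := by
    intro k l i j hne
    by_contra h
    exact (hcc k l i j h).elim hne.1 hne.2
  have z1 : R (0,0) (0,1) = 0 := hz 0 0 0 1 (by decide)
  have z2 : R (0,0) (1,0) = 0 := hz 0 0 1 0 (by decide)
  have z3 : R (0,0) (1,1) = 0 := hz 0 0 1 1 (by decide)
  have z4 : R (0,1) (0,0) = 0 := hz 0 1 0 0 (by decide)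
  have z5 : R (0,1) (1,1) = 0 := hz 0 1 1 1 (by decide)
  have z6 : R (1,0) (0,0) = 0 := hz 1 0 0 0 (by decide)
  have z7 : R (1,0) (1,1) = 0 := hz 1 0 1 1 (by decide)
  have z8 : R (1,1) (0,0) = 0 := hz 1 1 0 0 (by decide)
  have z9 : R (1,1) (0,1) = 0 := hz 1 1 0 1 (by decide)
  have z10 : R (1,1) (1,0) = 0 := hz 1 1 1 0 (by decide)
  obtain ⟨u, hu⟩ := hinv
  have hRu : R * (↑u⁻¹ : Matrix (Fin 2 × Fin 2) (Fin 2 × Fin 2) ℂ) = 1 := by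
    rw [← hu]; exact u.mul_inv
  have hA0 : R (0,0) (0,0) ≠ 0 := by
    intro h0
    have h1 := Matrix.ext_iff.2 hRu ((0:Fin 2),(0:Fin 2)) (0,0)
    simp [Matrix.mul_apply, Fintype.sum_prod_type, Fin.sum_univ_two, z1, z2, z3, h0,
      Matrix.one_apply, -Prod.mk_zero_zero, -Prod.mk_one_one] at h1
  have hB0 : R (1,1) (1,1) ≠ 0 := by
    intro h0
    have h1 := Matrix.ext_iff.2 hRu ((1:Fin 2),(1:Fin 2)) (1,1)
    simp [Matrix.mul_apply, Fintype.sum_prod_type, Fin.sum_univ_two, z8, z9, z10, h0,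
      Matrix.one_apply, -Prod.mk_zero_zero, -Prod.mk_one_one] at h1
  have hcase1 : (R (1,0) (1,0) = R (0,0) (0,0) ∧ R (0,1) (0,1) = R (0,0) (0,0) ∧
      R (1,1) (1,1) = R (0,0) (0,0) ∧ R (1,0) (0,1) = 0 ∧ R (0,1) (1,0) = 0) ↔
      R = R (0,0) (0,0) • (1 : Matrix (Fin 2 × Fin 2) (Fin 2 × Fin 2) ℂ) := by
    constructor
    · rintro ⟨ha, hd, hb2, hb, hc⟩
      ext ⟨i, j⟩ ⟨k, l⟩
      fin_cases i <;> fin_cases j <;> fin_cases k <;> fin_cases l <;>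
        simp [Matrix.one_apply, Matrix.smul_apply, Fin.mk_zero, Fin.mk_one, -Prod.mk_zero_zero,
          -Prod.mk_one_one, z1, z2, z3, z4, z5, z6, z7, z8, z9, z10, ha, hd, hb2, hb, hc]
    · intro h
      refine ⟨?_, ?_, ?_, ?_, ?_⟩ <;>
        · rw [h]; simp [Matrix.one_apply, -Prod.mk_zero_zero, -Prod.mk_one_one]
  simp only [e1, e2]
  rw [braid_iff R hcc, class_iff _ _ _ _ _ _ hA0 hB0, hcase1]
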